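/- (Proposition 1.) Let H be a real Hilbert space and u, g : (0, ∞) → H functions satisfying, for all λ, λ' > 0, the identity (λ + λ')⟨u(λ), u(λ')⟩ = ‖g(λ) − g(λ')‖² + λ‖u(λ)‖² + λ'‖u(λ')‖². If there exists a strictly decreasing sequence (λ_k)_{k≥0} of positive reals tending to 0 with ∑_{k=1}^∞ √(λ_{k−1}) · ‖u(λ_k)‖ < ∞, then both: (i) √λ · u(λ) → 0 in norm as λ → 0⁺, and (ii) there exists w ∈ H with g(λ) → w in norm as λ → 0⁺. -/

import Mathlib

open RealInnerProductSpace

theorem stmt_8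
    {H : Type*} [NormedAddCommGroup H] [InnerProductSpace ℝ H] [CompleteSpace H]
    (u g : ℝ → H)
    (hid : ∀ l l' : ℝ, 0 < l → 0 < l' →
      (l + l') * ⟪u l, u l'⟫ =
        ‖g l - g l'‖ ^ 2 + l * ‖u l‖ ^ 2 + l' * ‖u l'‖ ^ 2)
    (lam : ℕ → ℝ) (hpos : ∀ k, 0 < lam k) (hanti : StrictAnti lam)
    (hlim : Filter.Tendsto lam Filter.atTop (nhds 0))
    (hsum : Summable (fun k : ℕ => Real.sqrt (lam k) * ‖u (lam (k + 1))‖)) :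
    Filter.Tendsto (fun l : ℝ => Real.sqrt l • u l)
      (nhdsWithin 0 (Set.Ioi 0)) (nhds 0) ∧
    ∃ w : H, Filter.Tendsto g (nhdsWithin 0 (Set.Ioi 0)) (nhds w) := by
  classical
  -- norm of u is nonincreasing
  have hmono : ∀ l l' : ℝ, 0 < l → l ≤ l' → ‖u l'‖ ≤ ‖u l‖ := by
    intro l l' hl hll'
    have hl' : 0 < l' := lt_of_lt_of_le hl hll'
    have h := hid l l' hl hl'
    have hip : ⟪u l, u l'⟫ ≤ ‖u l‖ * ‖u l'‖ := real_inner_le_norm _ _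
    have hg : (0:ℝ) ≤ ‖g l - g l'‖ ^ 2 := sq_nonneg _
    by_contra hcon
    push_neg at hcon
    have h2 : l * ‖u l‖ < l' * ‖u l'‖ := by
      nlinarith [mul_pos hl (sub_pos.mpr hcon),
        mul_nonneg (sub_nonneg.mpr hll') (norm_nonneg (u l'))]
    nlinarith [mul_pos (sub_pos.mpr hcon) (sub_pos.mpr h2), mul_pos hl hl']
  -- key bound on g differences
  have hGsq : ∀ l l' : ℝ, 0 < l → l ≤ l' →
      ‖g l - g l'‖ ^ 2 ≤ (2 * l') * ‖u l‖ ^ 2 := by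
    intro l l' hl hll'
    have hl' : 0 < l' := lt_of_lt_of_le hl hll'
    have h := hid l l' hl hl'
    have hip : ⟪u l, u l'⟫ ≤ ‖u l‖ * ‖u l'‖ := real_inner_le_norm _ _
    have hb : ‖u l'‖ ≤ ‖u l‖ := hmono l l' hl hll'
    have e1 : (l + l') * ⟪u l, u l'⟫ ≤ (l + l') * (‖u l‖ * ‖u l'‖) :=
      mul_le_mul_of_nonneg_left hip (by linarith)
    have e2 : (l + l') * (‖u l‖ * ‖u l'‖) ≤ 2 * l' * (‖u l‖ * ‖u l'‖) := by
      nlinarith [mul_nonneg (norm_nonneg (u l)) (norm_nonneg (u l'))]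
    have e3 : 2 * l' * (‖u l‖ * ‖u l'‖) ≤ 2 * l' * ‖u l‖ ^ 2 := by
      nlinarith [mul_nonneg (mul_nonneg hl'.le (norm_nonneg (u l))) (sub_nonneg.mpr hb)]
    nlinarith [mul_nonneg hl.le (sq_nonneg ‖u l‖), mul_nonneg hl'.le (sq_nonneg ‖u l'‖)]
  have hGle : ∀ l l' : ℝ, 0 < l → l ≤ l' →
      ‖g l - g l'‖ ≤ Real.sqrt (2 * l') * ‖u l‖ := by
    intro l l' hl hll'
    have h := hGsq l l' hl hll'
    have h1 : ‖g l - g l'‖ = Real.sqrt (‖g l - g l'‖ ^ 2) := by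
      rw [Real.sqrt_sq (norm_nonneg _)]
    rw [h1]
    calc Real.sqrt (‖g l - g l'‖ ^ 2) ≤ Real.sqrt ((2 * l') * ‖u l‖ ^ 2) :=
          Real.sqrt_le_sqrt h
      _ = Real.sqrt (2 * l') * ‖u l‖ := by
          rw [Real.sqrt_mul (by linarith : (0:ℝ) ≤ 2 * l'), Real.sqrt_sq (norm_nonneg _)]
  -- the controlling sequence
  set c : ℕ → ℝ := fun k => Real.sqrt (lam k) * ‖u (lam (k + 1))‖ with hc
  have hc0 : Filter.Tendsto c Filter.atTop (nhds 0) := hsum.tendsto_atTop_zero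
  have hcnn : ∀ k, 0 ≤ c k := fun k =>
    mul_nonneg (Real.sqrt_nonneg _) (norm_nonneg _)
  -- Cauchy sequence g (lam k)
  have hdist : ∀ k : ℕ, dist (g (lam k)) (g (lam (k + 1))) ≤ Real.sqrt 2 * c k := by
    intro k
    have h := hGle (lam (k+1)) (lam k) (hpos _) (hanti (Nat.lt_succ_self k)).le
    rw [dist_eq_norm, norm_sub_rev]
    calc ‖g (lam (k+1)) - g (lam k)‖ ≤ Real.sqrt (2 * lam k) * ‖u (lam (k+1))‖ := h
      _ = Real.sqrt 2 * c k := by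
          rw [Real.sqrt_mul (by norm_num : (0:ℝ) ≤ 2)]
          ring
  have hcauchy : CauchySeq (fun k => g (lam k)) :=
    cauchySeq_of_dist_le_of_summable _ hdist (hsum.mul_left (Real.sqrt 2))
  obtain ⟨w, hw⟩ := cauchySeq_tendsto_of_complete hcauchy
  -- index-locating lemma
  have hidx : ∀ K : ℕ, ∀ x : ℝ, 0 < x → x < lam K →
      ∃ k, K ≤ k ∧ lam (k + 1) < x ∧ x ≤ lam k := by
    intro K x hx hxK
    have hev : ∃ n, lam n < x := (hlim.eventually (gt_mem_nhds hx)).exists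
    set m := Nat.find hev with hm
    have hspec : lam m < x := Nat.find_spec hev
    have hKm : K < m := by
      by_contra hcon
      push_neg at hcon
      have : lam K ≤ lam m := hanti.antitone hcon
      linarith
    refine ⟨m - 1, by omega, ?_, ?_⟩
    · have : m - 1 + 1 = m := by omega
      rw [this]; exact hspec
    · have hmin := Nat.find_min hev (show m - 1 < m by omega)
      exact le_of_not_gt hmin
  constructor
  · -- part (i)
    rw [Metric.tendsto_nhdsWithin_nhds]
    intro ε hε
    obtain ⟨K, hK⟩ := (Metric.tendsto_atTop.mp hc0) ε hε
    refine ⟨lam K, hpos K, ?_⟩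
    intro x hx hdx
    have hx0 : 0 < x := hx
    have hxK : x < lam K := by
      have : dist x 0 = x := by rw [Real.dist_eq, sub_zero, abs_of_pos hx0]
      linarith [this ▸ hdx]
    obtain ⟨k, hKk, hk1, hk2⟩ := hidx K x hx0 hxK
    have hbound : Real.sqrt x * ‖u x‖ ≤ c k := by
      have h1 : Real.sqrt x ≤ Real.sqrt (lam k) := Real.sqrt_le_sqrt hk2
      have h2 : ‖u x‖ ≤ ‖u (lam (k + 1))‖ := hmono _ _ (hpos _) hk1.le
      exact mul_le_mul h1 h2 (norm_nonneg _) (Real.sqrt_nonneg _)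
    have hck : c k < ε := by
      have := hK k hKk
      rw [Real.dist_eq, sub_zero, abs_of_nonneg (hcnn k)] at this
      exact this
    rw [dist_zero_right, norm_smul, Real.norm_eq_abs,
      abs_of_nonneg (Real.sqrt_nonneg x)]
    exact lt_of_le_of_lt hbound hck
  · -- part (ii)
    refine ⟨w, ?_⟩
    rw [Metric.tendsto_nhdsWithin_nhds]
    intro ε hε
    have hε2 : 0 < ε / 2 := by linarith
    obtain ⟨K1, hK1⟩ := (Metric.tendsto_atTop.mp hc0) (ε / 2 / Real.sqrt 2)
      (by positivity)
    obtain ⟨K2, hK2⟩ := (Metric.tendsto_atTop.mp hw) (ε / 2) hε2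
    refine ⟨lam (max K1 K2), hpos _, ?_⟩
    intro x hx hdx
    have hx0 : 0 < x := hx
    have hxK : x < lam (max K1 K2) := by
      have : dist x 0 = x := by rw [Real.dist_eq, sub_zero, abs_of_pos hx0]
      linarith [this ▸ hdx]
    obtain ⟨k, hKk, hk1, hk2⟩ := hidx (max K1 K2) x hx0 hxK
    have hgk : ‖g x - g (lam k)‖ ≤ Real.sqrt 2 * c k := by
      calc ‖g x - g (lam k)‖ ≤ Real.sqrt (2 * lam k) * ‖u x‖ :=
            hGle x (lam k) hx0 hk2
        _ ≤ Real.sqrt (2 * lam k) * ‖u (lam (k + 1))‖ := by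
            exact mul_le_mul_of_nonneg_left (hmono _ _ (hpos _) hk1.le)
              (Real.sqrt_nonneg _)
        _ = Real.sqrt 2 * c k := by
            rw [Real.sqrt_mul (by norm_num : (0:ℝ) ≤ 2)]; ring
    have hck : Real.sqrt 2 * c k < ε / 2 := by
      have h := hK1 k (le_trans (le_max_left _ _) hKk)
      rw [Real.dist_eq, sub_zero, abs_of_nonneg (hcnn k)] at h
      have hs2 : (0:ℝ) < Real.sqrt 2 := by positivity
      calc Real.sqrt 2 * c k < Real.sqrt 2 * (ε / 2 / Real.sqrt 2) := by
            exact mul_lt_mul_of_pos_left h hs2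
        _ = ε / 2 := by field_simp
    have hwk : dist (g (lam k)) w < ε / 2 := hK2 k (le_trans (le_max_right _ _) hKk)
    calc dist (g x) w ≤ dist (g x) (g (lam k)) + dist (g (lam k)) w := dist_triangle _ _ _
      _ < ε / 2 + ε / 2 := by
          rw [dist_eq_norm]
          exact add_lt_add_of_le_of_lt (lt_of_le_of_lt hgk hck).le hwk
      _ = ε := by ring
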